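/- Let T ⊆ ℝ² be the triangle conv{(0,0), (1,0), (1/2,−1)}. Then: (a) the inequality x₂ ≥ 0 is a split cut for T (it is valid for both {x ∈ T : x₁ ≤ 0} and {x ∈ T : x₁ ≥ 1}); (b) for every lattice basis {c¹, c²} of ℤ² such that x̄ := (1/2, −1) is the lexicographically minimum point of T with respect to ⪯_C, setting ℓ₂ := ⌈min{c²·x : x ∈ T}⌉ and letting k be the smallest index with c^k·x̄ ∉ ℤ, there exists a point x ∈ T with x₂ < 0 that satisfies the generated lex-cut inequality, namely c¹·x ≥ ⌈c¹·x̄⌉ if k = 1, and ⌈c²·x̄ − ℓ₂⌉·(c¹·x − c¹·x̄) + c²·x ≥ ⌈c²·x̄⌉ if k = 2. Hence the split cut x₂ ≥ 0 is not implied by any such lex-cut on T. -/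

import Mathlib

/-- Dot product of an integer vector with a real vector. -/
def rdot {n : ℕ} (c : Fin n → ℤ) (x : Fin n → ℝ) : ℝ := ∑ j, (c j : ℝ) * x j

/-- Lexicographic strict order associated with the lattice basis given by the rows of `C`. -/
def lexLtC {n : ℕ} (C : Matrix (Fin n) (Fin n) ℤ) (x y : Fin n → ℝ) : Prop :=
  ∃ i : Fin n, rdot (C i) x < rdot (C i) y ∧ ∀ j : Fin n, j < i → rdot (C j) x = rdot (C j) y

/-- `x ⪯_C y` iff `x ≺_C y` or `x = y`. -/
def lexLeC {n : ℕ} (C : Matrix (Fin n) (Fin n) ℤ) (x y : Fin n → ℝ) : Prop :=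
  lexLtC C x y ∨ x = y

lemma key1 (p q : ℤ) (h : Odd (p - 2*q)) (h1 : p - 2*q ≤ 0) (h2 : p - 2*q ≤ 2*p) :
    3 ≤ -(p - 2*q) ∨ 3 ≤ 2*p - (p - 2*q) := by
  obtain ⟨k, hk⟩ := h; omega

lemma key2 (u w t r p α L : ℤ)
    (ht : w = 2*t - 1) (hr : Odd r) (hp : Even p) (hu : Even u)
    (h1 : u ≤ 0) (h2 : u ≤ 2*p)
    (h3 : u = 0 → w ≤ -1) (h4 : u = 2*p → 1 ≤ 2*r - w)
    (hL : L = min (min 0 r) t) (hα : α = t - L) :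
    3 ≤ α * (-u) - w ∨ 3 ≤ α * (2*p - u) + (2*r - w) := by
  obtain ⟨k, hk⟩ := hr
  obtain ⟨m2, hm2⟩ := hp
  obtain ⟨m1, hm1⟩ := hu
  by_cases hc : t ≤ min 0 r
  · have hα0 : α = 0 := by omega
    rw [hα0]; omega
  · push_neg at hc
    by_cases h0r : 0 ≤ r
    · have hat : α = t := by omega
      have ht1 : 1 ≤ t := by omega
      have hr1 : 1 ≤ r := by omega
      have hu2 : u ≤ -2 := by omega
      rcases le_or_gt u (-4) with h4' | h4'
      · left
        have hprod : α * 4 ≤ α * (-u) := by nlinarith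
        nlinarith
      · have hu' : u = -2 := by omega
        right
        have hp0 : 0 ≤ p := by omega
        have hprod : α * 2 ≤ α * (2*p - u) := by nlinarith
        linarith
    · push_neg at h0r
      have hα' : α = t - r := by omega
      have htr : r < t := by omega
      rcases le_or_gt u (-2) with hu' | hu'
      · left
        have hprod : α * 2 ≤ α * (-u) := by nlinarith
        linarith
      · have hu0 : u = 0 := by omega
        right
        have hp' : p ≠ 0 := by intro h; have := h4 (by omega); omega
        have hp2 : 2 ≤ p := by omega
        have hprod : α * 4 ≤ α * (2*p - u) := by nlinarith
        linarith

lemma ceil_odd_half (w t : ℤ) (h : w = 2*t - 1) : ⌈(w:ℝ)/2⌉ = t := by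
  have he : (w:ℝ)/2 = (-1/2 : ℝ) + t := by rw [h]; push_cast; ring
  rw [he, Int.ceil_add_intCast]
  norm_num

lemma lex_facts {C : Matrix (Fin 2) (Fin 2) ℤ} {x y : Fin 2 → ℝ}
    (h : lexLeC C x y) (hne : x ≠ y) :
    rdot (C 0) x ≤ rdot (C 0) y ∧
      (rdot (C 0) x = rdot (C 0) y → rdot (C 1) x < rdot (C 1) y) := by
  rcases h with ⟨i, hlt, hpr⟩ | rfl
  · fin_cases i
    · exact ⟨le_of_lt hlt, fun he => absurd he (ne_of_lt hlt)⟩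
    · exact ⟨le_of_eq (hpr 0 (by decide)), fun _ => hlt⟩
  · exact absurd rfl hne

lemma hull3 (α β γ : ℝ) (h1 : γ ≤ 0) (h2 : γ ≤ α) (h3 : γ ≤ α/2 - β) :
    ∀ x ∈ convexHull ℝ ({![(0:ℝ), 0], ![(1:ℝ), 0], ![(1:ℝ)/2, -1]} : Set (Fin 2 → ℝ)),
      γ ≤ α * x 0 + β * x 1 := by
  intro x hx
  have hsub : convexHull ℝ ({![(0:ℝ), 0], ![(1:ℝ), 0], ![(1:ℝ)/2, -1]} : Set (Fin 2 → ℝ))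
      ⊆ {y : Fin 2 → ℝ | γ ≤ α * y 0 + β * y 1} := by
    apply convexHull_min
    · rintro y hy
      simp only [Set.mem_insert_iff, Set.mem_singleton_iff] at hy
      rcases hy with rfl | rfl | rfl <;> simp <;> linarith
    · intro y hy z hz a b ha hb hab
      simp only [Set.mem_setOf_eq] at *
      have e0 : (a • y + b • z) 0 = a * y 0 + b * z 0 := rfl
      have e1 : (a • y + b • z) 1 = a * y 1 + b * z 1 := rfl
      rw [e0, e1]
      nlinarith [mul_le_mul_of_nonneg_left hy ha, mul_le_mul_of_nonneg_left hz hb]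
  exact hsub hx

lemma rdot_two (c : Fin 2 → ℤ) (x : Fin 2 → ℝ) :
    rdot c x = (c 0 : ℝ) * x 0 + (c 1 : ℝ) * x 1 := by
  simp [rdot, Fin.sum_univ_two]

lemma rdot_a (c : Fin 2 → ℤ) : rdot c ![(0:ℝ), 0] = 0 := by
  rw [rdot_two]; simp

lemma rdot_b (c : Fin 2 → ℤ) : rdot c ![(1:ℝ), 0] = (c 0 : ℝ) := by
  rw [rdot_two]; simp

lemma rdot_xbar (c : Fin 2 → ℤ) :
    rdot c ![(1:ℝ)/2, -1] = ((c 0 - 2 * c 1 : ℤ) : ℝ) / 2 := by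
  rw [rdot_two]; simp; push_cast; ring

lemma rdot_w1 (c : Fin 2 → ℤ) :
    rdot c ![(1:ℝ)/3, -2/3] = ((c 0 - 2 * c 1 : ℤ) : ℝ) / 3 := by
  rw [rdot_two]; simp; push_cast; ring

lemma rdot_w2 (c : Fin 2 → ℤ) :
    rdot c ![(2:ℝ)/3, -2/3] = ((c 0 : ℤ) : ℝ) / 3 + ((c 0 - 2 * c 1 : ℤ) : ℝ) / 3 := by
  rw [rdot_two]; simp; push_cast; ring

lemma memT1 : (![(1:ℝ)/3, -2/3] : Fin 2 → ℝ) ∈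
    convexHull ℝ ({![(0:ℝ), 0], ![(1:ℝ), 0], ![(1:ℝ)/2, -1]} : Set (Fin 2 → ℝ)) := by
  have h : (![(1:ℝ)/3, -2/3] : Fin 2 → ℝ) ∈ segment ℝ (![(1:ℝ)/2, -1]) (![(0:ℝ), 0]) := by
    refine ⟨2/3, 1/3, by norm_num, by norm_num, by norm_num, ?_⟩
    funext i
    fin_cases i <;> simp <;> norm_num
  exact segment_subset_convexHull (by simp) (by simp) h

lemma memT2 : (![(2:ℝ)/3, -2/3] : Fin 2 → ℝ) ∈
    convexHull ℝ ({![(0:ℝ), 0], ![(1:ℝ), 0], ![(1:ℝ)/2, -1]} : Set (Fin 2 → ℝ)) := by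
  have h : (![(2:ℝ)/3, -2/3] : Fin 2 → ℝ) ∈ segment ℝ (![(1:ℝ)/2, -1]) (![(1:ℝ), 0]) := by
    refine ⟨2/3, 1/3, by norm_num, by norm_num, by norm_num, ?_⟩
    funext i
    fin_cases i <;> simp <;> norm_num
  exact segment_subset_convexHull (by simp) (by simp) h

/-- Let `T ⊆ ℝ²` be the triangle `conv {(0,0), (1,0), (1/2,-1)}`. Then
(a) `x₂ ≥ 0` is a split cut for `T` (valid on `{x ∈ T : x₁ ≤ 0}` and `{x ∈ T : x₁ ≥ 1}`);
(b) for every lattice basis `{c¹, c²}` of `ℤ²` (rows of a unimodular `C`) for which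
`x̄ = (1/2,-1)` is the lex-min point of `T`, with `ℓ₂ = ⌈min {c²·x : x ∈ T}⌉` and `k`
the smallest index with `cᵏ·x̄ ∉ ℤ`, some point of `T` with `x₂ < 0` satisfies the
generated lex-cut (`c¹·x ≥ ⌈c¹·x̄⌉` if `k = 1`;
`⌈c²·x̄ - ℓ₂⌉·(c¹·x - c¹·x̄) + c²·x ≥ ⌈c²·x̄⌉` if `k = 2`), so the split cut `x₂ ≥ 0`
is not implied by the lex-cut on `T`. -/
theorem stmt14 (T : Set (Fin 2 → ℝ))
    (hT : T = convexHull ℝ {![(0:ℝ), 0], ![(1:ℝ), 0], ![(1:ℝ)/2, -1]}) :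
    ((∀ x ∈ T, x 0 ≤ 0 → 0 ≤ x 1) ∧ (∀ x ∈ T, 1 ≤ x 0 → 0 ≤ x 1)) ∧
    (∀ C : Matrix (Fin 2) (Fin 2) ℤ, (C.det = 1 ∨ C.det = -1) →
      ∀ xb : Fin 2 → ℝ, xb = ![(1:ℝ)/2, -1] → xb ∈ T → (∀ x ∈ T, lexLeC C xb x) →
      ∀ ℓ₂ : ℤ, ℓ₂ = ⌈sInf ((fun x => rdot (C 1) x) '' T)⌉ →
      ((¬ ∃ z : ℤ, rdot (C 0) xb = (z : ℝ)) →
        ∃ x ∈ T, x 1 < 0 ∧ (⌈rdot (C 0) xb⌉ : ℝ) ≤ rdot (C 0) x) ∧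
      (((∃ z : ℤ, rdot (C 0) xb = (z : ℝ)) ∧ (¬ ∃ z : ℤ, rdot (C 1) xb = (z : ℝ))) →
        ∃ x ∈ T, x 1 < 0 ∧
          (⌈rdot (C 1) xb - (ℓ₂ : ℝ)⌉ : ℝ) * (rdot (C 0) x - rdot (C 0) xb)
            + rdot (C 1) x ≥ (⌈rdot (C 1) xb⌉ : ℝ))) := by
  subst hT
  constructor
  · constructor
    · intro x hx h0
      have := hull3 2 1 0 (by norm_num) (by norm_num) (by norm_num) x hx
      linarith
    · intro x hx h0
      have := hull3 (-2) 1 (-2) (by norm_num) (by norm_num) (by norm_num) x hx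
      linarith
  · intro C hdet xb hxb hxbT hmin ℓ₂ hℓ₂
    subst hxb
    have haT : (![(0:ℝ), 0] : Fin 2 → ℝ) ∈
        convexHull ℝ ({![(0:ℝ), 0], ![(1:ℝ), 0], ![(1:ℝ)/2, -1]} : Set (Fin 2 → ℝ)) :=
      subset_convexHull ℝ _ (by simp)
    have hbT : (![(1:ℝ), 0] : Fin 2 → ℝ) ∈
        convexHull ℝ ({![(0:ℝ), 0], ![(1:ℝ), 0], ![(1:ℝ)/2, -1]} : Set (Fin 2 → ℝ)) :=
      subset_convexHull ℝ _ (by simp)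
    have hna : (![(1:ℝ)/2, -1] : Fin 2 → ℝ) ≠ ![(0:ℝ), 0] := by
      intro h; have := congrFun h 1; simp at this
    have hnb : (![(1:ℝ)/2, -1] : Fin 2 → ℝ) ≠ ![(1:ℝ), 0] := by
      intro h; have := congrFun h 1; simp at this
    have hfa := lex_facts (hmin _ haT) hna
    have hfb := lex_facts (hmin _ hbT) hnb
    -- first-level lex conditions, in ℤ
    have h1 : C 0 0 - 2 * C 0 1 ≤ 0 := by
      have := hfa.1
      rw [rdot_xbar, rdot_a] at this
      push_cast at this
      exact_mod_cast (show ((C 0 0 - 2 * C 0 1 : ℤ) : ℝ) ≤ ((0:ℤ):ℝ) by push_cast; linarith)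
    have h2 : C 0 0 - 2 * C 0 1 ≤ 2 * C 0 0 := by
      have := hfb.1
      rw [rdot_xbar, rdot_b] at this
      push_cast at this
      exact_mod_cast (show ((C 0 0 - 2 * C 0 1 : ℤ) : ℝ) ≤ ((2 * C 0 0 : ℤ):ℝ) by push_cast; linarith)
    constructor
    · -- k = 1
      intro hni
      have hodd : Odd (C 0 0 - 2 * C 0 1) := by
        rcases Int.even_or_odd (C 0 0 - 2 * C 0 1) with he | ho
        · exfalso
          obtain ⟨k, hk⟩ := he
          exact hni ⟨k, by rw [rdot_xbar, hk]; push_cast; ring⟩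
        · exact ho
      obtain ⟨k, hk⟩ := hodd
      have hceil : ⌈rdot (C 0) ![(1:ℝ)/2, -1]⌉ = k + 1 := by
        rw [rdot_xbar]
        exact ceil_odd_half _ _ (by omega)
      rcases key1 (C 0 0) (C 0 1) ⟨k, hk⟩ h1 h2 with h | h
      · refine ⟨![(1:ℝ)/3, -2/3], memT1, by norm_num, ?_⟩
        rw [hceil, rdot_w1]
        have hkR : ((C 0 0 - 2 * C 0 1 : ℤ) : ℝ) = 2 * (k:ℝ) + 1 := by exact_mod_cast hk
        have hR : ((C 0 0 - 2 * C 0 1 : ℤ) : ℝ) ≤ -3 := by exact_mod_cast (by omega : (C 0 0 - 2 * C 0 1 : ℤ) ≤ -3)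
        push_cast at hkR hR ⊢
        linarith
      · refine ⟨![(2:ℝ)/3, -2/3], memT2, by norm_num, ?_⟩
        rw [hceil, rdot_w2]
        have hkR : ((C 0 0 - 2 * C 0 1 : ℤ) : ℝ) = 2 * (k:ℝ) + 1 := by exact_mod_cast hk
        have hR : (3:ℝ) ≤ 2 * ((C 0 0 : ℤ):ℝ) - ((C 0 0 - 2 * C 0 1 : ℤ) : ℝ) := by
          exact_mod_cast (show ((3:ℤ):ℝ) ≤ ((2 * C 0 0 - (C 0 0 - 2 * C 0 1) : ℤ):ℝ) by exact_mod_cast h)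
        push_cast at hkR hR ⊢
        linarith
    · -- k = 2
      rintro ⟨⟨z0, hz0⟩, hni⟩
      rw [rdot_xbar] at hz0
      have hu : C 0 0 - 2 * C 0 1 = 2 * z0 := by
        exact_mod_cast (show ((C 0 0 - 2 * C 0 1 : ℤ) : ℝ) = ((2 * z0 : ℤ):ℝ) by push_cast; push_cast at hz0; linarith)
      have hwodd : Odd (C 1 0 - 2 * C 1 1) := by
        rcases Int.even_or_odd (C 1 0 - 2 * C 1 1) with he | ho
        · exfalso
          obtain ⟨k, hk⟩ := he
          exact hni ⟨k, by rw [rdot_xbar, hk]; push_cast; ring⟩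
        · exact ho
      obtain ⟨k2, hk2⟩ := hwodd
      have hrodd : Odd (C 1 0) := by
        rcases Int.even_or_odd (C 1 0) with he | ho
        · exfalso; obtain ⟨n, hn⟩ := he; omega
        · exact ho
      have hpE : Even (C 0 0) := by
        rcases Int.even_or_odd (C 0 0) with he | ho
        · exact he
        · exfalso; obtain ⟨n, hn⟩ := ho; omega
      -- compute sInf
      set m : ℝ := min (min 0 ((C 1 0 : ℤ):ℝ)) (((C 1 0 - 2 * C 1 1 : ℤ):ℝ)/2) with hm
      have hlow : ∀ y ∈ (fun x => rdot (C 1) x) '' convexHull ℝ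
          ({![(0:ℝ), 0], ![(1:ℝ), 0], ![(1:ℝ)/2, -1]} : Set (Fin 2 → ℝ)), m ≤ y := by
        rintro y ⟨x, hx, rfl⟩
        have h3 : m ≤ ((C 1 0 : ℤ):ℝ)/2 - ((C 1 1 : ℤ):ℝ) := by
          have := min_le_right (min 0 ((C 1 0 : ℤ):ℝ)) (((C 1 0 - 2 * C 1 1 : ℤ):ℝ)/2)
          rw [← hm] at this
          push_cast at this ⊢
          linarith
        have h1' : m ≤ 0 := le_trans (min_le_left _ _) (min_le_left _ _)
        have h2' : m ≤ ((C 1 0 : ℤ):ℝ) := le_trans (min_le_left _ _) (min_le_right _ _)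
        have := hull3 ((C 1 0 : ℤ):ℝ) ((C 1 1 : ℤ):ℝ) m h1' h2' h3 x hx
        simp only [rdot_two]
        exact this
      have hbdd : BddBelow ((fun x => rdot (C 1) x) '' convexHull ℝ
          ({![(0:ℝ), 0], ![(1:ℝ), 0], ![(1:ℝ)/2, -1]} : Set (Fin 2 → ℝ))) :=
        ⟨m, fun y hy => hlow y hy⟩
      have hS : sInf ((fun x => rdot (C 1) x) '' convexHull ℝ
          ({![(0:ℝ), 0], ![(1:ℝ), 0], ![(1:ℝ)/2, -1]} : Set (Fin 2 → ℝ))) = m := by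
        apply le_antisymm
        · apply le_min
          · apply le_min
            · exact csInf_le hbdd ⟨_, haT, rdot_a (C 1)⟩
            · exact csInf_le hbdd ⟨_, hbT, rdot_b (C 1)⟩
          · exact csInf_le hbdd ⟨_, hxbT, rdot_xbar (C 1)⟩
        · exact le_csInf ⟨_, ⟨_, hxbT, rfl⟩⟩ (fun y hy => hlow y hy)
      have hl2 : ℓ₂ = min (min 0 (C 1 0)) (k2 + 1) := by
        have e1 := Int.ceil_mono.map_min (a := min (0:ℝ) ((C 1 0 : ℤ):ℝ))
          (b := ((C 1 0 - 2 * C 1 1 : ℤ):ℝ)/2)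
        have e2 := Int.ceil_mono.map_min (a := (0:ℝ)) (b := ((C 1 0 : ℤ):ℝ))
        rw [hℓ₂, hS, hm, e1, e2, ceil_odd_half _ _ (by omega : C 1 0 - 2 * C 1 1 = 2*(k2+1) - 1)]
        norm_num
      have hceilA : ⌈rdot (C 1) ![(1:ℝ)/2, -1] - (ℓ₂ : ℝ)⌉ = (k2 + 1) - ℓ₂ := by
        rw [rdot_xbar, Int.ceil_sub_intCast,
          ceil_odd_half _ _ (by omega : C 1 0 - 2 * C 1 1 = 2*(k2+1) - 1)]
      have hceilB : ⌈rdot (C 1) ![(1:ℝ)/2, -1]⌉ = k2 + 1 := by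
        rw [rdot_xbar]
        exact ceil_odd_half _ _ (by omega)
      -- second-level lex conditions
      have h3 : C 0 0 - 2 * C 0 1 = 0 → C 1 0 - 2 * C 1 1 ≤ -1 := by
        intro h0
        have heq : rdot (C 0) ![(1:ℝ)/2, -1] = rdot (C 0) ![(0:ℝ), 0] := by
          rw [rdot_xbar, rdot_a, h0]; norm_num
        have := hfa.2 heq
        rw [rdot_xbar, rdot_a] at this
        have : ((C 1 0 - 2 * C 1 1 : ℤ):ℝ) < 0 := by linarith
        have := (by exact_mod_cast this : (C 1 0 - 2 * C 1 1 : ℤ) < 0)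
        omega
      have h4 : C 0 0 - 2 * C 0 1 = 2 * C 0 0 → 1 ≤ 2 * C 1 0 - (C 1 0 - 2 * C 1 1) := by
        intro h0
        have heq : rdot (C 0) ![(1:ℝ)/2, -1] = rdot (C 0) ![(1:ℝ), 0] := by
          rw [rdot_xbar, rdot_b, h0]; push_cast; ring
        have := hfb.2 heq
        rw [rdot_xbar, rdot_b] at this
        have hlt : ((C 1 0 - 2 * C 1 1 : ℤ):ℝ) < ((2 * C 1 0 : ℤ):ℝ) := by push_cast at this ⊢; linarith
        have := (by exact_mod_cast hlt : (C 1 0 - 2 * C 1 1 : ℤ) < 2 * C 1 0)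
        omega
      rcases key2 (C 0 0 - 2 * C 0 1) (C 1 0 - 2 * C 1 1) (k2 + 1) (C 1 0) (C 0 0)
          ((k2 + 1) - ℓ₂) ℓ₂ (by omega) hrodd hpE ⟨z0, by omega⟩ h1 h2 h3 h4 hl2 rfl with h | h
      · refine ⟨![(1:ℝ)/3, -2/3], memT1, by norm_num, ?_⟩
        rw [hceilA, hceilB, rdot_w1, rdot_w1, rdot_xbar]
        have hR : (3:ℝ) ≤ ((k2 + 1 - ℓ₂ : ℤ):ℝ) * (-((C 0 0 - 2 * C 0 1 : ℤ):ℝ))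
            - ((C 1 0 - 2 * C 1 1 : ℤ):ℝ) := by exact_mod_cast h
        have hk2R : ((C 1 0 - 2 * C 1 1 : ℤ):ℝ) = 2 * (k2:ℝ) + 1 := by exact_mod_cast hk2
        push_cast at hR hk2R ⊢
        nlinarith [hR]
      · refine ⟨![(2:ℝ)/3, -2/3], memT2, by norm_num, ?_⟩
        rw [hceilA, hceilB, rdot_w2, rdot_w2, rdot_xbar]
        have hR : (3:ℝ) ≤ ((k2 + 1 - ℓ₂ : ℤ):ℝ) * ((2 * C 0 0 - (C 0 0 - 2 * C 0 1) : ℤ):ℝ)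
            + ((2 * C 1 0 - (C 1 0 - 2 * C 1 1) : ℤ):ℝ) := by exact_mod_cast h
        have hk2R : ((C 1 0 - 2 * C 1 1 : ℤ):ℝ) = 2 * (k2:ℝ) + 1 := by exact_mod_cast hk2
        push_cast at hR hk2R ⊢
        nlinarith [hR]
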